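/- Let Φ⁺ be B_n⁺ or C_n⁺ and let γ = ε_i − ε_j with 1 ≤ i < j ≤ n. Suppose α₁, β₁, α₂, β₂ ∈ Φ⁺ satisfy α₁ + β₁ = α₂ + β₂ = γ and {α₁, β₁} ≠ {α₂, β₂} as sets. Then α₁ + α₂ ∉ Φ⁺. -/

import Mathlib

/-- The standard basis vector `ε_i` of `ℝⁿ`. -/
noncomputable def eps (n : ℕ) (i : Fin n) : Fin n → ℝ := Pi.single i 1

/-- The positive roots of type `A_{n-1}`: `ε_i - ε_j` for `i < j`. -/
def PhiA (n : ℕ) : Set (Fin n → ℝ) :=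
  {v | ∃ i j : Fin n, i < j ∧ v = eps n i - eps n j}

/-- The positive roots of type `B_n`: `ε_i - ε_j`, `ε_i + ε_j` for `i < j`, and `ε_i`. -/
def PhiB (n : ℕ) : Set (Fin n → ℝ) :=
  {v | (∃ i j : Fin n, i < j ∧ (v = eps n i - eps n j ∨ v = eps n i + eps n j)) ∨
    ∃ i : Fin n, v = eps n i}

/-- The positive roots of type `C_n`: `ε_i - ε_j`, `ε_i + ε_j` for `i < j`, and `2ε_i`. -/
def PhiC (n : ℕ) : Set (Fin n → ℝ) :=
  {v | (∃ i j : Fin n, i < j ∧ (v = eps n i - eps n j ∨ v = eps n i + eps n j)) ∨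
    ∃ i : Fin n, v = eps n i + eps n i}

/-- The positive roots of type `D_n`: `ε_i - ε_j` and `ε_i + ε_j` for `i < j`. -/
def PhiD (n : ℕ) : Set (Fin n → ℝ) :=
  {v | ∃ i j : Fin n, i < j ∧ (v = eps n i - eps n j ∨ v = eps n i + eps n j)}


lemma eps_apply' (n : ℕ) (a m : Fin n) : eps n a m = if m = a then 1 else 0 := by
  simp [eps, Pi.single_apply]

lemma mem_struct' (n : ℕ) (Φ : Set (Fin n → ℝ)) (hΦ : Φ = PhiB n ∨ Φ = PhiC n)
    (v : Fin n → ℝ) (hv : v ∈ Φ) :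
    ((∃ a b : Fin n, a < b ∧ v = eps n a - eps n b) ∧ ∑ m, v m = 0) ∨ (1 ≤ ∑ m, v m) := by
  rcases hΦ with rfl | rfl <;>
    rcases hv with ⟨a, b, hab, h | h⟩ | ⟨a, h⟩ <;> subst h
  · exact Or.inl ⟨⟨a, b, hab, rfl⟩, by simp [eps, Finset.sum_sub_distrib]⟩
  · right; simp [eps, Finset.sum_add_distrib]
  · right; simp [eps]
  · exact Or.inl ⟨⟨a, b, hab, rfl⟩, by simp [eps, Finset.sum_sub_distrib]⟩
  · right; simp [eps, Finset.sum_add_distrib]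
  · right; simp [eps, Finset.sum_add_distrib]

lemma key' (n : ℕ) (a b c d i j : Fin n) (hab : a < b) (hcd : c < d) (hij : i < j)
    (H : eps n a - eps n b + (eps n c - eps n d) = eps n i - eps n j) :
    ∃ k : Fin n, i < k ∧ k < j ∧
      ((a = i ∧ b = k ∧ c = k ∧ d = j) ∨ (a = k ∧ b = j ∧ c = i ∧ d = k)) := by
  have hac : a ≠ c := by
    intro h'; subst h'
    have h := congrFun H a
    simp only [Pi.add_apply, Pi.sub_apply, eps_apply'] at h
    split_ifs at h <;> first | omega | norm_num at h
  have hbd : b ≠ d := by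
    intro h'; subst h'
    have h := congrFun H b
    simp only [Pi.add_apply, Pi.sub_apply, eps_apply'] at h
    split_ifs at h <;> first | omega | norm_num at h
  by_cases hbc : b = c
  · subst hbc
    have had : a ≠ d := by
      intro h'; subst h'
      have h := congrFun H i
      simp only [Pi.add_apply, Pi.sub_apply, eps_apply'] at h
      split_ifs at h <;> first | omega | norm_num at h
    have ha : a = i := by
      have h := congrFun H a
      simp only [Pi.add_apply, Pi.sub_apply, eps_apply'] at h
      split_ifs at h <;> first | omega | norm_num at h
    have hd : d = j := by
      have h := congrFun H d
      simp only [Pi.add_apply, Pi.sub_apply, eps_apply'] at h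
      split_ifs at h <;> first | omega | norm_num at h
    exact ⟨b, by omega, by omega, Or.inl ⟨ha, rfl, rfl, hd⟩⟩
  · have had : a = d := by
      by_contra had
      have h1 := congrFun H a
      have h2 := congrFun H c
      simp only [Pi.add_apply, Pi.sub_apply, eps_apply'] at h1 h2
      split_ifs at h1 h2 <;> first | omega | linarith
    subst had
    have hc : c = i := by
      have h := congrFun H c
      simp only [Pi.add_apply, Pi.sub_apply, eps_apply'] at h
      split_ifs at h <;> first | omega | norm_num at h
    have hb : b = j := by
      have h := congrFun H b
      simp only [Pi.add_apply, Pi.sub_apply, eps_apply'] at h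
      split_ifs at h <;> first | omega | norm_num at h
    exact ⟨a, by omega, by omega, Or.inr ⟨rfl, hb, hc, rfl⟩⟩

lemma decomp' (n : ℕ) (Φ : Set (Fin n → ℝ)) (hΦ : Φ = PhiB n ∨ Φ = PhiC n)
    (i j : Fin n) (hij : i < j) (α β : Fin n → ℝ) (hα : α ∈ Φ) (hβ : β ∈ Φ)
    (h : α + β = eps n i - eps n j) :
    ∃ k : Fin n, i < k ∧ k < j ∧
      ((α = eps n i - eps n k ∧ β = eps n k - eps n j) ∨
       (α = eps n k - eps n j ∧ β = eps n i - eps n k)) := by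
  have hsum : ∑ m, α m + ∑ m, β m = 0 := by
    have h' := congrArg (fun v : Fin n → ℝ => ∑ m, v m) h
    simpa [eps, Finset.sum_add_distrib, Finset.sum_sub_distrib] using h'
  rcases mem_struct' n Φ hΦ α hα with ⟨⟨a, b, hab, rfl⟩, hLa⟩ | hLa
  · rcases mem_struct' n Φ hΦ β hβ with ⟨⟨c, d, hcd, rfl⟩, hLb⟩ | hLb
    · obtain ⟨k, hik, hkj, hcase⟩ := key' n a b c d i j hab hcd hij h
      refine ⟨k, hik, hkj, ?_⟩
      rcases hcase with ⟨ha, hb, hc, hd⟩ | ⟨ha, hb, hc, hd⟩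
      · exact Or.inl ⟨by rw [ha, hb], by rw [hc, hd]⟩
      · exact Or.inr ⟨by rw [ha, hb], by rw [hc, hd]⟩
    · exfalso; linarith
  · rcases mem_struct' n Φ hΦ β hβ with ⟨⟨c, d, hcd, rfl⟩, hLb⟩ | hLb <;>
      [exfalso; exfalso] <;> linarith

/-- In `B_n⁺` or `C_n⁺`, if `γ = ε_i - ε_j` (`i < j`) has two distinct decompositions
`α₁ + β₁ = α₂ + β₂ = γ` as sums of two positive roots, then `α₁ + α₂` is not a positive
root. -/
theorem sum_not_root_of_two_decompositions_BC (n : ℕ) (Φ : Set (Fin n → ℝ))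
    (hΦ : Φ = PhiB n ∨ Φ = PhiC n)
    (i j : Fin n) (hij : i < j)
    (α₁ β₁ α₂ β₂ : Fin n → ℝ)
    (hα₁ : α₁ ∈ Φ) (hβ₁ : β₁ ∈ Φ) (hα₂ : α₂ ∈ Φ) (hβ₂ : β₂ ∈ Φ)
    (h₁ : α₁ + β₁ = eps n i - eps n j) (h₂ : α₂ + β₂ = eps n i - eps n j)
    (hne : ({α₁, β₁} : Set (Fin n → ℝ)) ≠ {α₂, β₂}) :
    α₁ + α₂ ∉ Φ := by
  obtain ⟨k, hik, hkj, hc1⟩ := decomp' n Φ hΦ i j hij α₁ β₁ hα₁ hβ₁ h₁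
  obtain ⟨l, hil, hlj, hc2⟩ := decomp' n Φ hΦ i j hij α₂ β₂ hα₂ hβ₂ h₂
  have hkl : k ≠ l := by
    intro h'; subst h'
    apply hne
    rcases hc1 with ⟨ha, hb⟩ | ⟨ha, hb⟩ <;> rcases hc2 with ⟨hc, hd⟩ | ⟨hc, hd⟩ <;>
      rw [ha, hb, hc, hd] <;> first | rfl | exact Set.pair_comm _ _
  have A1 : α₁ = eps n i - eps n k ∨ α₁ = eps n k - eps n j := hc1.imp And.left And.left
  have A2 : α₂ = eps n i - eps n l ∨ α₂ = eps n l - eps n j := hc2.imp And.left And.left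
  intro hmem
  have hL : ∑ m, (α₁ + α₂) m = 0 := by
    rcases A1 with h | h <;> rcases A2 with h' | h' <;> rw [h, h'] <;>
      simp [eps, Finset.sum_add_distrib, Finset.sum_sub_distrib]
  rcases mem_struct' n Φ hΦ _ hmem with ⟨⟨e, f, hef, Heq⟩, -⟩ | hL'
  · rcases A1 with h | h <;> rcases A2 with h' | h' <;> rw [h, h'] at Heq
    · have hk := congrFun Heq k
      have hl := congrFun Heq l
      simp only [Pi.add_apply, Pi.sub_apply, eps_apply', hik.ne', hil.ne', hkl,
        Ne.symm hkl, if_true, if_false, if_pos rfl, if_neg] at hk hl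
      split_ifs at hk hl <;> first | omega | linarith
    · have hk := congrFun Heq k
      have hj := congrFun Heq j
      simp only [Pi.add_apply, Pi.sub_apply, eps_apply', hik.ne', hkl, hkj.ne,
        hij.ne', hkj.ne', hlj.ne', if_true, if_false, if_pos rfl, if_neg] at hk hj
      split_ifs at hk hj <;> first | omega | linarith
    · have hj := congrFun Heq j
      have hl := congrFun Heq l
      simp only [Pi.add_apply, Pi.sub_apply, eps_apply', hkj.ne', hij.ne', hlj.ne',
        Ne.symm hkl, hlj.ne, hil.ne', if_true, if_false, if_pos rfl, if_neg] at hj hl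
      split_ifs at hj hl <;> first | omega | linarith
    · have hj := congrFun Heq j
      simp only [Pi.add_apply, Pi.sub_apply, eps_apply', hkj.ne', hlj.ne',
        if_true, if_false, if_pos rfl, if_neg] at hj
      split_ifs at hj <;> first | omega | norm_num at hj
  · linarith
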